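/- If C' is a dominating set of the hypercube F_2^n, then C = F_2^2 ⊕ C' = {(a,b,c) : a,b ∈ {0,1}, c ∈ C'} is a local identifying code in F_2^{n+2}. Consequently the minimum size of a local identifying code in F_2^{n+2} is at most 4 times the minimum size of a dominating set in F_2^n. -/

import Mathlib

open SimpleGraph

/-- The closed neighbourhood of a vertex. -/
def cnbr {V : Type*} (G : SimpleGraph V) (u : V) : Set V := insert u (G.neighborSet u)

/-- The `I`-set of a vertex with respect to a code `C`. -/
def iset {V : Type*} (G : SimpleGraph V) (C : Set V) (u : V) : Set V := cnbr G u ∩ C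

/-- `C` is a dominating set (covering code). -/
def IsDominating {V : Type*} (G : SimpleGraph V) (C : Set V) : Prop :=
  ∀ u, (iset G C u).Nonempty

/-- `C` is a local identifying code. -/
def IsLocalID {V : Type*} (G : SimpleGraph V) (C : Set V) : Prop :=
  IsDominating G C ∧ ∀ u v, G.Adj u v → iset G C u ≠ iset G C v

/-- `C` is a local locating-dominating code. -/
def IsLocalLD {V : Type*} (G : SimpleGraph V) (C : Set V) : Prop :=
  IsDominating G C ∧ ∀ u v, G.Adj u v → u ∉ C → v ∉ C → iset G C u ≠ iset G C v

/-- `C` is an identifying code. -/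
def IsID {V : Type*} (G : SimpleGraph V) (C : Set V) : Prop :=
  IsDominating G C ∧ ∀ u v : V, u ≠ v → iset G C u ≠ iset G C v

/-- `C` is a locating-dominating code. -/
def IsLD {V : Type*} (G : SimpleGraph V) (C : Set V) : Prop :=
  IsDominating G C ∧ ∀ u v : V, u ≠ v → u ∉ C → v ∉ C → iset G C u ≠ iset G C v

/-- The share of a codeword `c`. -/
noncomputable def share {V : Type*} (G : SimpleGraph V) (C : Set V) (c : V) : ℝ :=
  ∑ᶠ u ∈ cnbr G c, (1 : ℝ) / (iset G C u).ncard

/-- The binary `n`-dimensional hypercube. -/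
def cube (n : ℕ) : SimpleGraph (Fin n → ZMod 2) where
  Adj x y := hammingDist x y = 1
  symm := ⟨fun x y h => by simpa [hammingDist_comm] using h⟩
  loopless := ⟨fun x h => by simp [hammingDist_self] at h⟩

lemma hd_cons {n : ℕ} (a b : ZMod 2) (x y : Fin n → ZMod 2) :
    hammingDist (Fin.cons a x : Fin (n+1) → ZMod 2) (Fin.cons b y) =
      (if a = b then 0 else 1) + hammingDist x y := by
  unfold hammingDist
  rw [Finset.card_filter, Finset.card_filter, Fin.sum_univ_succ]
  simp [Fin.cons_succ, ite_not]

lemma hd_cc {n : ℕ} (a b a' b' : ZMod 2) (x y : Fin n → ZMod 2) :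
    hammingDist (Fin.cons a (Fin.cons b x) : Fin (n+2) → ZMod 2) (Fin.cons a' (Fin.cons b' y)) =
      (if a = a' then 0 else 1) + (if b = b' then 0 else 1) + hammingDist x y := by
  rw [hd_cons, hd_cons]; ring

lemma hd_one_iff {n : ℕ} {x y : Fin n → ZMod 2} :
    hammingDist x y = 1 ↔ ∃ i, x i ≠ y i ∧ ∀ j, j ≠ i → x j = y j := by
  unfold hammingDist
  rw [Finset.card_eq_one]
  constructor
  · rintro ⟨i, hi⟩
    refine ⟨i, ?_, fun j hj => ?_⟩
    · have : i ∈ Finset.filter (fun i => x i ≠ y i) Finset.univ := hi ▸ Finset.mem_singleton_self i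
      simpa using this
    · by_contra h
      have : j ∈ Finset.filter (fun i => x i ≠ y i) Finset.univ := by simpa using h
      rw [hi, Finset.mem_singleton] at this
      exact hj this
  · rintro ⟨i, hi, hj⟩
    refine ⟨i, ?_⟩
    ext j
    simp only [Finset.mem_filter, Finset.mem_univ, true_and, Finset.mem_singleton]
    constructor
    · intro h; by_contra hne; exact h (hj j hne)
    · rintro rfl; exact hi

lemma zmod2_ne (b : ZMod 2) : ¬ b = b + 1 := by revert b; decide

lemma zmod2_tri {p q r : ZMod 2} (h1 : p ≠ q) (h2 : p ≠ r) : q = r := by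
  revert h1 h2; revert p q r; decide

lemma hd_two {n : ℕ} {x y z : Fin n → ZMod 2} (h1 : hammingDist x y = 1)
    (h2 : hammingDist x z = 1) (hne : y ≠ z) : hammingDist y z = 2 := by
  obtain ⟨i, hi, hi'⟩ := hd_one_iff.mp h1
  obtain ⟨j, hj, hj'⟩ := hd_one_iff.mp h2
  have hij : i ≠ j := by
    rintro rfl
    apply hne
    funext k
    by_cases hk : k = i
    · subst hk; exact zmod2_tri hi hj
    · rw [← hi' k hk, hj' k hk]
  have hset : Finset.filter (fun k => y k ≠ z k) Finset.univ = {i, j} := by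
    ext k
    simp only [Finset.mem_filter, Finset.mem_univ, true_and, Finset.mem_insert,
      Finset.mem_singleton]
    constructor
    · intro h
      by_contra hk
      push_neg at hk
      exact h ((hi' k hk.1).symm.trans (hj' k hk.2))
    · rintro (hk | hk) <;> rw [hk]
      · rw [← hj' i hij]; exact hi.symm
      · rw [← hi' j (Ne.symm hij)]; exact hj
  unfold hammingDist
  rw [hset, Finset.card_pair hij]

lemma mem_cnbr {m : ℕ} {v w : Fin m → ZMod 2} :
    w ∈ cnbr (cube m) v ↔ w = v ∨ hammingDist v w = 1 := by
  simp [cnbr, mem_neighborSet]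
  rfl

lemma not_mem_cnbr {m : ℕ} {v w : Fin m → ZMod 2} (h : hammingDist v w = 2) :
    w ∉ cnbr (cube m) v := by
  rw [mem_cnbr]
  rintro (rfl | h1)
  · rw [hammingDist_self] at h; omega
  · omega

lemma iset_ne {V : Type*} (G : SimpleGraph V) (C : Set V) {u v w : V} (hC : w ∈ C)
    (h1 : w ∈ cnbr G u) (h2 : w ∉ cnbr G v) : iset G C u ≠ iset G C v := by
  intro h
  exact h2 ((h ▸ (⟨h1, hC⟩ : w ∈ iset G C u)) : w ∈ iset G C v).1

lemma decomp {n : ℕ} (u : Fin (n + 2) → ZMod 2) :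
    u = Fin.cons (u 0) (Fin.cons (Fin.tail u 0) (Fin.tail (Fin.tail u))) := by
  rw [Fin.cons_self_tail, Fin.cons_self_tail]

lemma tailtail_cons {n : ℕ} (a b : ZMod 2) (x : Fin n → ZMod 2) :
    Fin.tail (Fin.tail (Fin.cons a (Fin.cons b x) : Fin (n+2) → ZMod 2)) = x := by
  rw [Fin.tail_cons, Fin.tail_cons]

lemma mem_code {n : ℕ} {C' : Set (Fin n → ZMod 2)} {a b : ZMod 2} {x : Fin n → ZMod 2}
    (h : x ∈ C') :
    (Fin.cons a (Fin.cons b x) : Fin (n+2) → ZMod 2) ∈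
      ((fun x => Fin.tail (Fin.tail x)) ⁻¹' C') := by
  rw [Set.mem_preimage, tailtail_cons]
  exact h

lemma part1 (n : ℕ) (C' : Set (Fin n → ZMod 2)) (hdom : IsDominating (cube n) C') :
    IsLocalID (cube (n + 2)) ((fun x => Fin.tail (Fin.tail x)) ⁻¹' C') := by
  set C : Set (Fin (n+2) → ZMod 2) := (fun x => Fin.tail (Fin.tail x)) ⁻¹' C' with hC
  constructor
  · -- domination
    have key : ∀ (a b : ZMod 2) (x : Fin n → ZMod 2),
        (iset (cube (n+2)) C (Fin.cons a (Fin.cons b x))).Nonempty := by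
      intro a b x
      obtain ⟨c', hc', hc'C⟩ := hdom x
      rcases mem_cnbr.mp hc' with rfl | hadjx
      · exact ⟨_, Set.mem_insert _ _, mem_code hc'C⟩
      · refine ⟨Fin.cons a (Fin.cons b c'), mem_cnbr.mpr (Or.inr ?_), mem_code hc'C⟩
        rw [hd_cc, if_pos rfl, if_pos rfl, hadjx]
    intro u
    rw [decomp u]
    exact key _ _ _
  · -- local identification
    have key : ∀ (a b a' b' : ZMod 2) (x y : Fin n → ZMod 2),
        hammingDist (Fin.cons a (Fin.cons b x) : Fin (n+2) → ZMod 2)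
          (Fin.cons a' (Fin.cons b' y)) = 1 →
        iset (cube (n+2)) C (Fin.cons a (Fin.cons b x)) ≠
          iset (cube (n+2)) C (Fin.cons a' (Fin.cons b' y)) := by
      intro a b a' b' x y h
      rw [hd_cc] at h
      obtain ⟨c', hc', hc'C⟩ := hdom x
      rcases eq_or_ne a a' with rfl | haa <;> rcases eq_or_ne b b' with rfl | hbb
      · -- a = a', b = b', hd x y = 1
        rw [if_pos rfl, if_pos rfl] at h
        have hxy : hammingDist x y = 1 := by omega
        rcases mem_cnbr.mp hc' with rfl | hadjx
        · refine iset_ne _ _ (w := Fin.cons (a+1) (Fin.cons b c')) (mem_code hc'C)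
            (mem_cnbr.mpr (Or.inr ?_)) (not_mem_cnbr ?_)
          · rw [hd_cc, if_neg (zmod2_ne a), if_pos rfl, hammingDist_self]
          · rw [hd_cc, if_neg (zmod2_ne a), if_pos rfl, hammingDist_comm, hxy]
        · rcases eq_or_ne c' y with rfl | hcy
          · refine (iset_ne _ _ (w := Fin.cons (a+1) (Fin.cons b c')) (mem_code hc'C)
              (mem_cnbr.mpr (Or.inr ?_)) (not_mem_cnbr ?_)).symm
            · rw [hd_cc, if_neg (zmod2_ne a), if_pos rfl, hammingDist_self]
            · rw [hd_cc, if_neg (zmod2_ne a), if_pos rfl, hxy]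
          · refine iset_ne _ _ (w := Fin.cons a (Fin.cons b c')) (mem_code hc'C)
              (mem_cnbr.mpr (Or.inr ?_)) (not_mem_cnbr ?_)
            · rw [hd_cc, if_pos rfl, if_pos rfl, hadjx]
            · rw [hd_cc, if_pos rfl, if_pos rfl,
                hd_two (hammingDist_comm x y ▸ hxy) hadjx (fun hh => hcy hh.symm)]
      · -- a = a', b ≠ b', x = y
        rw [if_pos rfl, if_neg hbb] at h
        obtain rfl : x = y := hammingDist_eq_zero.mp (by omega)
        rcases mem_cnbr.mp hc' with rfl | hadjx
        · refine iset_ne _ _ (w := Fin.cons (a+1) (Fin.cons b c')) (mem_code hc'C)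
            (mem_cnbr.mpr (Or.inr ?_)) (not_mem_cnbr ?_)
          · rw [hd_cc, if_neg (zmod2_ne a), if_pos rfl, hammingDist_self]
          · rw [hd_cc, if_neg (zmod2_ne a), if_neg (Ne.symm hbb), hammingDist_self]
        · refine iset_ne _ _ (w := Fin.cons a (Fin.cons b c')) (mem_code hc'C)
            (mem_cnbr.mpr (Or.inr ?_)) (not_mem_cnbr ?_)
          · rw [hd_cc, if_pos rfl, if_pos rfl, hadjx]
          · rw [hd_cc, if_pos rfl, if_neg (Ne.symm hbb), hadjx]
      · -- a ≠ a', b = b', x = y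
        rw [if_neg haa, if_pos rfl] at h
        obtain rfl : x = y := hammingDist_eq_zero.mp (by omega)
        rcases mem_cnbr.mp hc' with rfl | hadjx
        · refine iset_ne _ _ (w := Fin.cons a (Fin.cons (b+1) c')) (mem_code hc'C)
            (mem_cnbr.mpr (Or.inr ?_)) (not_mem_cnbr ?_)
          · rw [hd_cc, if_pos rfl, if_neg (zmod2_ne b), hammingDist_self]
          · rw [hd_cc, if_neg (Ne.symm haa), if_neg (zmod2_ne b), hammingDist_self]
        · refine iset_ne _ _ (w := Fin.cons a (Fin.cons b c')) (mem_code hc'C)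
            (mem_cnbr.mpr (Or.inr ?_)) (not_mem_cnbr ?_)
          · rw [hd_cc, if_pos rfl, if_pos rfl, hadjx]
          · rw [hd_cc, if_neg (Ne.symm haa), if_pos rfl, hadjx]
      · -- a ≠ a', b ≠ b' : impossible
        rw [if_neg haa, if_neg hbb] at h
        omega
    intro u v hadj
    have huv : hammingDist u v = 1 := hadj
    rw [decomp u, decomp v] at huv ⊢
    exact key _ _ _ _ _ _ huv

def codeEquiv {n : ℕ} (C' : Set (Fin n → ZMod 2)) :
    ((fun x => Fin.tail (Fin.tail x)) ⁻¹' C' : Set (Fin (n+2) → ZMod 2)) ≃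
      ZMod 2 × ZMod 2 × C' where
  toFun x := (x.1 0, Fin.tail x.1 0, ⟨Fin.tail (Fin.tail x.1), x.2⟩)
  invFun p := ⟨Fin.cons p.1 (Fin.cons p.2.1 p.2.2.1), by
    rw [Set.mem_preimage, tailtail_cons]; exact p.2.2.2⟩
  left_inv x := by
    apply Subtype.ext
    exact (decomp x.1).symm
  right_inv p := by
    obtain ⟨a, b, c, hc⟩ := p
    refine Prod.ext ?_ (Prod.ext ?_ ?_)
    · simp [Fin.cons_zero]
    · simp [Fin.tail_cons, Fin.cons_zero]
    · apply Subtype.ext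
      exact tailtail_cons a b c

lemma card4 {n : ℕ} (C' : Set (Fin n → ZMod 2)) :
    ((fun x => Fin.tail (Fin.tail x)) ⁻¹' C' : Set (Fin (n+2) → ZMod 2)).ncard =
      4 * C'.ncard := by
  show Nat.card _ = 4 * Nat.card _
  rw [Nat.card_congr (codeEquiv C'), Nat.card_prod, Nat.card_prod, Nat.card_zmod]
  ring


/-- If `C'` is a dominating set of `F_2^n` then `F_2^2 ⊕ C'` is a local identifying code
in `F_2^{n+2}`; consequently the minimum size of a local identifying code in `F_2^{n+2}`
is at most `4` times the minimum size of a dominating set in `F_2^n`. -/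
theorem stmt12 (n : ℕ) :
    (∀ C' : Set (Fin n → ZMod 2), IsDominating (cube n) C' →
      IsLocalID (cube (n + 2)) ((fun x => Fin.tail (Fin.tail x)) ⁻¹' C')) ∧
    sInf {k : ℕ | ∃ C : Set (Fin (n + 2) → ZMod 2), IsLocalID (cube (n + 2)) C ∧ C.ncard = k} ≤
      4 * sInf {k : ℕ | ∃ C' : Set (Fin n → ZMod 2), IsDominating (cube n) C' ∧ C'.ncard = k} := by
  refine ⟨part1 n, ?_⟩
  have hne : {k : ℕ | ∃ C' : Set (Fin n → ZMod 2),
      IsDominating (cube n) C' ∧ C'.ncard = k}.Nonempty :=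
    ⟨(Set.univ : Set (Fin n → ZMod 2)).ncard, Set.univ,
      fun u => ⟨u, Set.mem_insert u _, Set.mem_univ u⟩, rfl⟩
  obtain ⟨C', hdom, hcard⟩ := Nat.sInf_mem hne
  exact Nat.sInf_le ⟨_, part1 n C' hdom, by rw [card4, hcard]⟩
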